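/- Let (S, 𝒮) be a measurable space, P a probability measure on S, and g : S^m → ℝ^d measurable. Let 1 ≤ p < ∞, let L ∈ L_p(ℝ^d) and h > 0. Then there is a constant c < ∞ depending only on m such that for every 1 ≤ k ≤ m and all x_1, …, x_k ∈ S, ‖ π_k L̄_h(·, x_1, …, x_k) ‖_{L_p(ℝ^d)} ≤ c ‖L‖_{L_p(ℝ^d)} / h^{(p−1)/p}. -/

import Mathlib

open MeasureTheory Finset
noncomputable section

/-- The `k`-th Hoeffding projection `π_k L` of an `m`-variable kernel `L` with respect to `P`:
`π_k L(x_1,…,x_k) = Σ_{A ⊆ {1,…,k}} (−1)^{k−|A|} E L(Y_1,…,Y_m)` where `Y_j = x_j` for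
`j ∈ A` and `Y_j` is an independent `P`-distributed variable otherwise. -/
def hproj {S : Type*} [MeasurableSpace S] (P : Measure S) (m k : ℕ)
    (L : (Fin m → S) → ℝ) (x : Fin k → S) : ℝ :=
  ∑ A : Finset (Fin k), (-1 : ℝ) ^ (k - A.card) *
    ∫ y : Fin m → S,
      L (fun j => if h : (j : ℕ) < k then
          (if (⟨(j : ℕ), h⟩ : Fin k) ∈ A then x ⟨(j : ℕ), h⟩ else y j) else y j)
      ∂(Measure.pi fun _ => P)

/-- The symmetrized dilated kernel
`L̄_h(t, x_1,…,x_m) = (1/m!) Σ_σ L_h(t − g(x_{σ(1)},…,x_{σ(m)}))`, where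
`L_h(t) = h^{−1} L(t/h^{1/d})`. -/
def Kbar {S : Type*} (d m : ℕ) (g : (Fin m → S) → EuclideanSpace ℝ (Fin d))
    (L : EuclideanSpace ℝ (Fin d) → ℝ) (h : ℝ) (t : EuclideanSpace ℝ (Fin d))
    (x : Fin m → S) : ℝ :=
  ((m.factorial : ℝ))⁻¹ * ∑ σ : Equiv.Perm (Fin m),
    h⁻¹ * L ((h ^ ((1 : ℝ) / d))⁻¹ • (t - g (x ∘ σ)))

open scoped ENNReal

lemma jensen_rpow_lintegral {α : Type*} [MeasurableSpace α] (μ : Measure α)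
    [IsProbabilityMeasure μ] {p : ℝ} (hp : 1 ≤ p) {v : α → ℝ≥0∞} (hv : AEMeasurable v μ) :
    (∫⁻ a, v a ∂μ) ^ p ≤ ∫⁻ a, v a ^ p ∂μ := by
  rcases eq_or_lt_of_le hp with hp1 | hp1
  · simp [← hp1]
  · have hpq : p.HolderConjugate (p / (p - 1)) := Real.HolderConjugate.conjExponent hp1
    have h1 : ∫⁻ a, v a ∂μ ≤ (∫⁻ a, v a ^ p ∂μ) ^ (1 / p) := by
      have := ENNReal.lintegral_mul_le_Lp_mul_Lq μ hpq hv
        (aemeasurable_const (b := (1 : ℝ≥0∞)))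
      simpa using this
    calc (∫⁻ a, v a ∂μ) ^ p ≤ ((∫⁻ a, v a ^ p ∂μ) ^ (1 / p)) ^ p :=
        ENNReal.rpow_le_rpow h1 (by linarith)
      _ = ∫⁻ a, v a ^ p ∂μ := by
        rw [← ENNReal.rpow_mul, one_div, inv_mul_cancel₀ (by linarith), ENNReal.rpow_one]

lemma stepT {d : ℕ} (hd : 1 ≤ d) {L : EuclideanSpace ℝ (Fin d) → ℝ} (hL : Measurable L)
    {p : ℝ} {h : ℝ} (hh : 0 < h) (a : EuclideanSpace ℝ (Fin d)) :
    ∫⁻ t, ENNReal.ofReal (|h⁻¹ * L ((h ^ ((1 : ℝ) / d))⁻¹ • (t - a))| ^ p) =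
      ENNReal.ofReal (h ^ (1 - p)) * ∫⁻ t, ENNReal.ofReal (|L t| ^ p) := by
  have hd0 : (d : ℝ) ≠ 0 := Nat.cast_ne_zero.2 (by omega)
  set s : ℝ := h ^ ((1 : ℝ) / d) with hsdef
  have hs : 0 < s := Real.rpow_pos_of_pos hh _
  have hsd : s ^ d = h := by
    rw [hsdef, ← Real.rpow_natCast (h ^ ((1 : ℝ) / d)) d, ← Real.rpow_mul hh.le,
      one_div, inv_mul_cancel₀ hd0, Real.rpow_one]
  set G : EuclideanSpace ℝ (Fin d) → ℝ≥0∞ := fun t => ENNReal.ofReal (|L t| ^ p) with hG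
  have hGm : Measurable G := by fun_prop
  have key : ∀ t, ENNReal.ofReal (|h⁻¹ * L (s⁻¹ • (t - a))| ^ p)
      = ENNReal.ofReal (|h⁻¹| ^ p) * G (s⁻¹ • (t - a)) := by
    intro t
    rw [abs_mul, Real.mul_rpow (abs_nonneg _) (abs_nonneg _), ENNReal.ofReal_mul
      (Real.rpow_nonneg (abs_nonneg _) _)]
  simp_rw [key]
  rw [lintegral_const_mul _ (by fun_prop)]
  have htrans : ∫⁻ t, G (s⁻¹ • (t - a)) = ∫⁻ t, G (s⁻¹ • t) := by
    simpa [sub_eq_add_neg] using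
      lintegral_add_right_eq_self (fun t => G (s⁻¹ • t)) (-a)
  have hscale : ∫⁻ t, G (s⁻¹ • t) = ENNReal.ofReal h * ∫⁻ t, G t := by
    rw [← lintegral_map hGm (measurable_const_smul s⁻¹),
      Measure.map_addHaar_smul volume (inv_ne_zero hs.ne'), lintegral_smul_measure]
    congr 2
    rw [finrank_euclideanSpace_fin, inv_pow, inv_inv, abs_of_pos (by positivity), hsd]
  rw [htrans, hscale, ← mul_assoc, ← ENNReal.ofReal_mul (Real.rpow_nonneg (abs_nonneg _) _)]
  congr 2
  rw [abs_of_pos (inv_pos.2 hh), Real.inv_rpow hh.le, show (1 : ℝ) - p = -p + 1 by ring,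
    Real.rpow_add hh, Real.rpow_one, Real.rpow_neg hh.le]

def mixFun {S : Type*} (m k : ℕ) (x : Fin k → S) (A : Finset (Fin k)) (y : Fin m → S) :
    Fin m → S :=
  fun j => if h : (j : ℕ) < k then
    (if (⟨(j : ℕ), h⟩ : Fin k) ∈ A then x ⟨(j : ℕ), h⟩ else y j) else y j

lemma measurable_mixFun {S : Type*} [MeasurableSpace S] (m k : ℕ) (x : Fin k → S)
    (A : Finset (Fin k)) : Measurable (mixFun m k x A) := by
  apply measurable_pi_lambda
  intro j
  unfold mixFun
  by_cases hj : (j : ℕ) < k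
  · simp only [hj, dif_pos]
    by_cases hA : (⟨(j : ℕ), hj⟩ : Fin k) ∈ A
    · simpa [hA] using measurable_const
    · simpa [hA] using measurable_pi_apply j
  · simpa [hj] using measurable_pi_apply j

lemma hproj_Kbar_eq {S : Type*} [MeasurableSpace S] (P : Measure S) (d m k : ℕ)
    (g : (Fin m → S) → EuclideanSpace ℝ (Fin d)) (L : EuclideanSpace ℝ (Fin d) → ℝ)
    (h : ℝ) (t : EuclideanSpace ℝ (Fin d)) (x : Fin k → S) :
    hproj P m k (Kbar d m g L h t) x =
      ∑ A : Finset (Fin k), (-1 : ℝ) ^ (k - A.card) *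
        ∫ y, Kbar d m g L h t (mixFun m k x A y) ∂(Measure.pi fun _ => P) := rfl

section parts

variable {S : Type} [MeasurableSpace S] (P : Measure S) (d m k : ℕ)
  (g : (Fin m → S) → EuclideanSpace ℝ (Fin d)) (L : EuclideanSpace ℝ (Fin d) → ℝ)
  (h : ℝ) (x : Fin k → S)

/-- The single translated-dilated function, indexed by a subset and a permutation. -/
def uFun (i : Finset (Fin k) × Equiv.Perm (Fin m))
    (q : EuclideanSpace ℝ (Fin d) × (Fin m → S)) : ℝ :=
  h⁻¹ * L ((h ^ ((1 : ℝ) / d))⁻¹ • (q.1 - g (mixFun m k x i.1 q.2 ∘ i.2)))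

lemma measurable_uFun (hg : Measurable g) (hL : Measurable L)
    (i : Finset (Fin k) × Equiv.Perm (Fin m)) : Measurable (uFun d m k g L h x i) := by
  have h1 : Measurable fun y : Fin m → S => mixFun m k x i.1 y ∘ i.2 := by
    apply measurable_pi_lambda
    intro j
    show Measurable fun y : Fin m → S => mixFun m k x i.1 y (i.2 j)
    exact (measurable_pi_apply (i.2 j)).comp (measurable_mixFun m k x i.1)
  have h2 : Measurable fun y : Fin m → S => g (mixFun m k x i.1 y ∘ i.2) := hg.comp h1
  unfold uFun
  exact (hL.comp ((measurable_fst.sub (h2.comp measurable_snd)).const_smul ((h ^ ((1 : ℝ) / d))⁻¹))).const_mul _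

/-- `V i t` : the `ν`-average of the absolute value of `uFun i (t, ·)`. -/
def VFun (i : Finset (Fin k) × Equiv.Perm (Fin m)) (t : EuclideanSpace ℝ (Fin d)) : ℝ≥0∞ :=
  ∫⁻ y, ENNReal.ofReal |uFun d m k g L h x i (t, y)| ∂(Measure.pi fun _ : Fin m => P)

lemma claim1 (hg : Measurable g) (hL : Measurable L)
    (t : EuclideanSpace ℝ (Fin d)) :
    ENNReal.ofReal |hproj P m k (Kbar d m g L h t) x| ≤
      ∑ i : Finset (Fin k) × Equiv.Perm (Fin m),
        ((m.factorial : ℝ≥0∞))⁻¹ * VFun P d m k g L h x i t := by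
  set ν : Measure (Fin m → S) := Measure.pi fun _ : Fin m => P with hν
  have stepa : ENNReal.ofReal |hproj P m k (Kbar d m g L h t) x| ≤
      ∑ A : Finset (Fin k), ENNReal.ofReal |∫ y, Kbar d m g L h t (mixFun m k x A y) ∂ν| := by
    rw [← ENNReal.ofReal_sum_of_nonneg (fun _ _ => abs_nonneg _)]
    apply ENNReal.ofReal_le_ofReal
    rw [hproj_Kbar_eq]
    refine (Finset.abs_sum_le_sum_abs _ _).trans ?_
    apply Finset.sum_le_sum
    intro A _
    rw [abs_mul, abs_pow, abs_neg, abs_one, one_pow, one_mul]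
  refine stepa.trans ?_
  rw [Fintype.sum_prod_type]
  apply Finset.sum_le_sum
  intro A _
  have hmeas : ∀ σ : Equiv.Perm (Fin m),
      Measurable fun y => ENNReal.ofReal |uFun d m k g L h x (A, σ) (t, y)| := by
    intro σ
    exact ENNReal.measurable_ofReal.comp (measurable_norm.comp
      ((measurable_uFun d m k g L h x hg hL (A, σ)).comp measurable_prodMk_left))
  calc ENNReal.ofReal |∫ y, Kbar d m g L h t (mixFun m k x A y) ∂ν|
      ≤ ∫⁻ y, ENNReal.ofReal |Kbar d m g L h t (mixFun m k x A y)| ∂ν := by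
        rw [← Real.norm_eq_abs, ofReal_norm]
        refine (enorm_integral_le_lintegral_enorm _).trans (le_of_eq ?_)
        exact lintegral_congr fun y => by rw [← ofReal_norm, Real.norm_eq_abs]
    _ ≤ ∫⁻ y, (m.factorial : ℝ≥0∞)⁻¹ *
          ∑ σ : Equiv.Perm (Fin m), ENNReal.ofReal |uFun d m k g L h x (A, σ) (t, y)| ∂ν := by
        apply lintegral_mono
        intro y
        have hKb : |Kbar d m g L h t (mixFun m k x A y)| ≤
            (m.factorial : ℝ)⁻¹ *
              ∑ σ : Equiv.Perm (Fin m), |uFun d m k g L h x (A, σ) (t, y)| := by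
          unfold Kbar uFun
          rw [abs_mul, abs_inv, Nat.abs_cast]
          exact mul_le_mul_of_nonneg_left (Finset.abs_sum_le_sum_abs _ _) (by positivity)
        refine (ENNReal.ofReal_le_ofReal hKb).trans (le_of_eq ?_)
        rw [ENNReal.ofReal_mul (by positivity),
          ENNReal.ofReal_sum_of_nonneg (fun _ _ => abs_nonneg _),
          ENNReal.ofReal_inv_of_pos (by positivity : (0 : ℝ) < (m.factorial : ℝ)),
          ENNReal.ofReal_natCast]
    _ = ∑ σ : Equiv.Perm (Fin m),
          (m.factorial : ℝ≥0∞)⁻¹ * VFun P d m k g L h x (A, σ) t := by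
        rw [lintegral_const_mul _ (Finset.measurable_sum _ fun σ _ => hmeas σ),
          lintegral_finset_sum _ fun σ _ => hmeas σ, Finset.mul_sum]
        rfl

lemma claim2 [IsProbabilityMeasure P] (hg : Measurable g) (hL : Measurable L)
    {p : ℝ} (hp : 1 ≤ p) (t : EuclideanSpace ℝ (Fin d)) :
    ENNReal.ofReal |hproj P m k (Kbar d m g L h t) x| ^ p ≤
      ((2 : ℝ≥0∞) ^ k) ^ p * ∑ i : Finset (Fin k) × Equiv.Perm (Fin m),
        ((2 ^ k * m.factorial : ℕ) : ℝ≥0∞)⁻¹ * VFun P d m k g L h x i t ^ p := by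
  have hp0 : (0 : ℝ) < p := lt_of_lt_of_le one_pos hp
  set N : ℕ := 2 ^ k * m.factorial with hNdef
  have hN0 : (N : ℝ≥0∞) ≠ 0 := by
    simp [hNdef, Nat.factorial_ne_zero, pow_ne_zero]
  have hNtop : (N : ℝ≥0∞) ≠ ⊤ := ENNReal.natCast_ne_top N
  have hcard : Fintype.card (Finset (Fin k) × Equiv.Perm (Fin m)) = N := by
    simp [hNdef, Fintype.card_prod, Fintype.card_perm]
  have h2k0 : ((2 : ℝ≥0∞) ^ k) ≠ 0 := by simp
  have h2ktop : ((2 : ℝ≥0∞) ^ k) ≠ ⊤ := by simp [ENNReal.pow_ne_top]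
  have hNcast : (N : ℝ≥0∞) = (2 : ℝ≥0∞) ^ k * (m.factorial : ℝ≥0∞) := by
    rw [hNdef]; push_cast; ring
  set w : Finset (Fin k) × Equiv.Perm (Fin m) → ℝ≥0∞ := fun _ => (N : ℝ≥0∞)⁻¹ with hw
  set z : Finset (Fin k) × Equiv.Perm (Fin m) → ℝ≥0∞ :=
    fun i => (2 : ℝ≥0∞) ^ k * VFun P d m k g L h x i t with hz
  have hwsum : ∑ i : Finset (Fin k) × Equiv.Perm (Fin m), w i = 1 := by
    rw [hw, Finset.sum_const, Finset.card_univ, hcard, nsmul_eq_mul]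
    exact ENNReal.mul_inv_cancel hN0 hNtop
  have hNk : (N : ℝ≥0∞)⁻¹ * (2 : ℝ≥0∞) ^ k = (m.factorial : ℝ≥0∞)⁻¹ := by
    rw [hNcast, ENNReal.mul_inv (Or.inl h2k0) (Or.inl h2ktop), mul_comm, ← mul_assoc,
      ENNReal.mul_inv_cancel h2k0 h2ktop, one_mul]
  have hzw : ∀ i, ((m.factorial : ℝ≥0∞))⁻¹ * VFun P d m k g L h x i t = w i * z i := by
    intro i
    rw [hw, hz, ← mul_assoc, hNk]
  calc ENNReal.ofReal |hproj P m k (Kbar d m g L h t) x| ^ p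
      ≤ (∑ i : Finset (Fin k) × Equiv.Perm (Fin m), w i * z i) ^ p := by
        apply ENNReal.rpow_le_rpow _ hp0.le
        refine (claim1 P d m k g L h x hg hL t).trans (le_of_eq ?_)
        exact Finset.sum_congr rfl fun i _ => hzw i
    _ ≤ ∑ i : Finset (Fin k) × Equiv.Perm (Fin m), w i * z i ^ p :=
        ENNReal.rpow_arith_mean_le_arith_mean_rpow univ w z hwsum hp
    _ = ((2 : ℝ≥0∞) ^ k) ^ p * ∑ i : Finset (Fin k) × Equiv.Perm (Fin m),
          (N : ℝ≥0∞)⁻¹ * VFun P d m k g L h x i t ^ p := by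
        rw [Finset.mul_sum]
        refine Finset.sum_congr rfl fun i _ => ?_
        rw [hw, hz, ENNReal.mul_rpow_of_nonneg _ _ hp0.le]
        ring

lemma mainbound [IsProbabilityMeasure P] (hd : 1 ≤ d) (hg : Measurable g) (hL : Measurable L)
    {p : ℝ} (hp : 1 ≤ p) (hh : 0 < h) :
    ∫⁻ t, ENNReal.ofReal (|hproj P m k (Kbar d m g L h t) x| ^ p) ≤
      ((2 : ℝ≥0∞) ^ k) ^ p *
        (ENNReal.ofReal (h ^ (1 - p)) * ∫⁻ t, ENNReal.ofReal (|L t| ^ p)) := by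
  have hp0 : (0 : ℝ) < p := lt_of_lt_of_le one_pos hp
  set ν : Measure (Fin m → S) := Measure.pi fun _ : Fin m => P with hν
  set N : ℕ := 2 ^ k * m.factorial with hNdef
  have hN0 : (N : ℝ≥0∞) ≠ 0 := by
    simp [hNdef, Nat.factorial_ne_zero, pow_ne_zero]
  have hNtop : (N : ℝ≥0∞) ≠ ⊤ := ENNReal.natCast_ne_top N
  have hcard : Fintype.card (Finset (Fin k) × Equiv.Perm (Fin m)) = N := by
    simp [hNdef, Fintype.card_prod, Fintype.card_perm]
  have hup : ∀ i : Finset (Fin k) × Equiv.Perm (Fin m),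
      Measurable fun q : EuclideanSpace ℝ (Fin d) × (Fin m → S) =>
        ENNReal.ofReal (|uFun d m k g L h x i q| ^ p) := by
    intro i
    exact ENNReal.measurable_ofReal.comp
      ((measurable_norm.comp (measurable_uFun d m k g L h x hg hL i)).pow_const p)
  have claim3 : ∀ (i : Finset (Fin k) × Equiv.Perm (Fin m)) (t : EuclideanSpace ℝ (Fin d)),
      VFun P d m k g L h x i t ^ p ≤
        ∫⁻ y, ENNReal.ofReal (|uFun d m k g L h x i (t, y)| ^ p) ∂ν := by
    intro i t
    have hv : AEMeasurable (fun y => ENNReal.ofReal |uFun d m k g L h x i (t, y)|) ν :=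
      (ENNReal.measurable_ofReal.comp (measurable_norm.comp
        ((measurable_uFun d m k g L h x hg hL i).comp measurable_prodMk_left))).aemeasurable
    refine (jensen_rpow_lintegral ν hp hv).trans (le_of_eq (lintegral_congr fun y => ?_))
    rw [ENNReal.ofReal_rpow_of_nonneg (abs_nonneg _) hp0.le]
  have hWm : ∀ i : Finset (Fin k) × Equiv.Perm (Fin m),
      Measurable fun t : EuclideanSpace ℝ (Fin d) =>
        ∫⁻ y, ENNReal.ofReal (|uFun d m k g L h x i (t, y)| ^ p) ∂ν :=
    fun i => (hup i).lintegral_prod_right'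
  calc ∫⁻ t, ENNReal.ofReal (|hproj P m k (Kbar d m g L h t) x| ^ p)
      ≤ ∫⁻ t, ((2 : ℝ≥0∞) ^ k) ^ p * ∑ i : Finset (Fin k) × Equiv.Perm (Fin m),
          (N : ℝ≥0∞)⁻¹ * ∫⁻ y, ENNReal.ofReal (|uFun d m k g L h x i (t, y)| ^ p) ∂ν := by
        apply lintegral_mono
        intro t
        dsimp only
        rw [← ENNReal.ofReal_rpow_of_nonneg (abs_nonneg _) hp0.le]
        refine (claim2 P d m k g L h x hg hL hp t).trans ?_
        exact mul_le_mul_right (Finset.sum_le_sum fun i _ =>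
          mul_le_mul_right (claim3 i t) _) _
    _ = ((2 : ℝ≥0∞) ^ k) ^ p * ∑ i : Finset (Fin k) × Equiv.Perm (Fin m),
          (N : ℝ≥0∞)⁻¹ * ∫⁻ t, ∫⁻ y,
            ENNReal.ofReal (|uFun d m k g L h x i (t, y)| ^ p) ∂ν := by
        rw [lintegral_const_mul' _ _ (by simp [ENNReal.pow_ne_top] :
            ((2 : ℝ≥0∞) ^ k) ^ p ≠ ⊤)]
        congr 1
        rw [lintegral_finset_sum _ (fun i _ => (hWm i).const_mul _)]
        exact Finset.sum_congr rfl fun i _ =>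
          lintegral_const_mul' _ _ (ENNReal.inv_ne_top.2 hN0)
    _ = ((2 : ℝ≥0∞) ^ k) ^ p *
          (ENNReal.ofReal (h ^ (1 - p)) * ∫⁻ t, ENNReal.ofReal (|L t| ^ p)) := by
        haveI : IsProbabilityMeasure ν := by rw [hν]; infer_instance
        congr 1
        have hterm : ∀ i : Finset (Fin k) × Equiv.Perm (Fin m),
            (∫⁻ t, ∫⁻ y, ENNReal.ofReal (|uFun d m k g L h x i (t, y)| ^ p) ∂ν) =
              ENNReal.ofReal (h ^ (1 - p)) * ∫⁻ t, ENNReal.ofReal (|L t| ^ p) := by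
          intro i
          rw [lintegral_lintegral_swap (hup i).aemeasurable]
          have hfix : ∀ y : Fin m → S,
              (∫⁻ t, ENNReal.ofReal (|uFun d m k g L h x i (t, y)| ^ p)) =
                ENNReal.ofReal (h ^ (1 - p)) * ∫⁻ t, ENNReal.ofReal (|L t| ^ p) :=
            fun y => stepT hd hL hh (g (mixFun m k x i.1 y ∘ i.2))
          rw [lintegral_congr hfix, lintegral_const, measure_univ, mul_one]
        calc ∑ i : Finset (Fin k) × Equiv.Perm (Fin m),
              (N : ℝ≥0∞)⁻¹ * ∫⁻ t, ∫⁻ y, ENNReal.ofReal (|uFun d m k g L h x i (t, y)| ^ p) ∂ν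
            = ∑ _i : Finset (Fin k) × Equiv.Perm (Fin m), (N : ℝ≥0∞)⁻¹ *
                (ENNReal.ofReal (h ^ (1 - p)) * ∫⁻ t, ENNReal.ofReal (|L t| ^ p)) :=
              Finset.sum_congr rfl fun i _ => by rw [hterm i]
          _ = ENNReal.ofReal (h ^ (1 - p)) * ∫⁻ t, ENNReal.ofReal (|L t| ^ p) := by
              rw [Finset.sum_const, Finset.card_univ, hcard, nsmul_eq_mul, ← mul_assoc,
                ENNReal.mul_inv_cancel hN0 hNtop, one_mul]

lemma measurable_hproj_Kbar [IsProbabilityMeasure P] (hg : Measurable g) (hL : Measurable L) :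
    Measurable fun t => hproj P m k (Kbar d m g L h t) x := by
  have hstrong : ∀ A : Finset (Fin k), StronglyMeasurable fun t : EuclideanSpace ℝ (Fin d) =>
      ∫ y, Kbar d m g L h t (mixFun m k x A y) ∂(Measure.pi fun _ : Fin m => P) := by
    intro A
    have hKm : Measurable fun q : EuclideanSpace ℝ (Fin d) × (Fin m → S) =>
        Kbar d m g L h q.1 (mixFun m k x A q.2) :=
      ((Finset.measurable_sum univ fun σ _ =>
        measurable_uFun d m k g L h x hg hL (A, σ)).const_mul _)
    exact hKm.stronglyMeasurable.integral_prod_right'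
  have heq : (fun t => hproj P m k (Kbar d m g L h t) x) =
      fun t => ∑ A : Finset (Fin k), (-1 : ℝ) ^ (k - A.card) *
        ∫ y, Kbar d m g L h t (mixFun m k x A y) ∂(Measure.pi fun _ : Fin m => P) :=
    funext fun t => hproj_Kbar_eq P d m k g L h t x
  rw [heq]
  exact Finset.measurable_sum _ fun A _ => ((hstrong A).measurable.const_mul _)

end parts

/-- There is a constant `c < ∞` depending only on `m` such that for every
measurable `g : S^m → ℝ^d`, every probability measure `P` on `S`, every `1 ≤ p < ∞`,
`L ∈ L_p(ℝ^d)`, `h > 0`, `1 ≤ k ≤ m` and `x_1, …, x_k ∈ S`,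
`‖π_k L̄_h(·, x_1,…,x_k)‖_{L_p(ℝ^d)} ≤ c ‖L‖_{L_p(ℝ^d)} / h^{(p−1)/p}`. -/
theorem stmt8 (m : ℕ) (hm : 1 ≤ m) :
    ∃ c : ℝ, 0 < c ∧
      ∀ (d : ℕ), 1 ≤ d →
      ∀ (S : Type) (_ : MeasurableSpace S) (P : Measure S), IsProbabilityMeasure P →
      ∀ g : (Fin m → S) → EuclideanSpace ℝ (Fin d), Measurable g →
      ∀ p : ℝ, 1 ≤ p →
      ∀ L : EuclideanSpace ℝ (Fin d) → ℝ, Measurable L →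
        Integrable (fun t : EuclideanSpace ℝ (Fin d) => |L t| ^ p) →
      ∀ h : ℝ, 0 < h →
      ∀ k : ℕ, 1 ≤ k → k ≤ m →
      ∀ x : Fin k → S,
        (∫ t : EuclideanSpace ℝ (Fin d), |hproj P m k (Kbar d m g L h t) x| ^ p) ^ (1 / p) ≤
          c * (∫ t : EuclideanSpace ℝ (Fin d), |L t| ^ p) ^ (1 / p) / h ^ ((p - 1) / p) := by
  classical
  refine ⟨2 ^ m, by positivity, ?_⟩
  intro d hd S _ P hP g hg p hp L hL hLint h hh k hk1 hkm x
  have hp0 : (0 : ℝ) < p := lt_of_lt_of_le one_pos hp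
  have hI0 : (0 : ℝ) ≤ ∫ t : EuclideanSpace ℝ (Fin d), |L t| ^ p :=
    integral_nonneg fun t => by positivity
  have hfm : Measurable fun t => hproj P m k (Kbar d m g L h t) x :=
    measurable_hproj_Kbar P d m k g L h x hg hL
  have hbound := mainbound P d m k g L h x hd hg hL hp hh
  have h2 : ENNReal.ofReal (∫ t : EuclideanSpace ℝ (Fin d), |L t| ^ p) =
      ∫⁻ t, ENNReal.ofReal (|L t| ^ p) :=
    ofReal_integral_eq_lintegral_ofReal hLint (Filter.Eventually.of_forall fun t => by positivity)
  have h3 : ((2 : ℝ≥0∞) ^ k) ^ p *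
        (ENNReal.ofReal (h ^ (1 - p)) * ∫⁻ t, ENNReal.ofReal (|L t| ^ p)) =
      ENNReal.ofReal (((2 : ℝ) ^ k) ^ p *
        (h ^ (1 - p) * ∫ t : EuclideanSpace ℝ (Fin d), |L t| ^ p)) := by
    rw [← h2, ← ENNReal.ofReal_mul (Real.rpow_nonneg hh.le _),
      show ((2 : ℝ≥0∞) ^ k) ^ p = ENNReal.ofReal (((2 : ℝ) ^ k) ^ p) by
        rw [← ENNReal.ofReal_rpow_of_nonneg (by positivity) hp0.le, ENNReal.ofReal_pow
          (by norm_num), ENNReal.ofReal_ofNat],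
      ← ENNReal.ofReal_mul (by positivity)]
  have hInt : Integrable (fun t : EuclideanSpace ℝ (Fin d) =>
      |hproj P m k (Kbar d m g L h t) x| ^ p) := by
    refine ⟨((measurable_norm.comp hfm).pow_const p).aestronglyMeasurable, ?_⟩
    rw [hasFiniteIntegral_iff_ofReal (Filter.Eventually.of_forall fun t => by positivity)]
    refine lt_of_le_of_lt hbound ?_
    rw [h3]
    exact ENNReal.ofReal_lt_top
  have hIle : (∫ t : EuclideanSpace ℝ (Fin d), |hproj P m k (Kbar d m g L h t) x| ^ p) ≤
      ((2 : ℝ) ^ k) ^ p * (h ^ (1 - p) * ∫ t : EuclideanSpace ℝ (Fin d), |L t| ^ p) := by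
    have h1 : ENNReal.ofReal (∫ t : EuclideanSpace ℝ (Fin d),
        |hproj P m k (Kbar d m g L h t) x| ^ p) =
        ∫⁻ t, ENNReal.ofReal (|hproj P m k (Kbar d m g L h t) x| ^ p) :=
      ofReal_integral_eq_lintegral_ofReal hInt
        (Filter.Eventually.of_forall fun t => by positivity)
    have := hbound
    rw [h3, ← h1] at this
    exact (ENNReal.ofReal_le_ofReal_iff (by positivity)).mp this
  have hL1 : (∫ t : EuclideanSpace ℝ (Fin d), |hproj P m k (Kbar d m g L h t) x| ^ p) ^ (1 / p) ≤
      (((2 : ℝ) ^ k) ^ p * (h ^ (1 - p) * ∫ t : EuclideanSpace ℝ (Fin d), |L t| ^ p)) ^ (1 / p) :=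
    Real.rpow_le_rpow (integral_nonneg fun t => by positivity) hIle (by positivity)
  have hsimp : (((2 : ℝ) ^ k) ^ p *
      (h ^ (1 - p) * ∫ t : EuclideanSpace ℝ (Fin d), |L t| ^ p)) ^ (1 / p) =
      (2 : ℝ) ^ k * (h ^ ((1 - p) / p) *
        (∫ t : EuclideanSpace ℝ (Fin d), |L t| ^ p) ^ (1 / p)) := by
    rw [Real.mul_rpow (by positivity) (mul_nonneg (Real.rpow_nonneg hh.le _) hI0),
      Real.mul_rpow (Real.rpow_nonneg hh.le _) hI0,
      ← Real.rpow_mul (by positivity : (0:ℝ) ≤ (2:ℝ) ^ k), mul_one_div, div_self hp0.ne',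
      Real.rpow_one, ← Real.rpow_mul hh.le, mul_one_div]
  have hdiv : (2 : ℝ) ^ m * (∫ t : EuclideanSpace ℝ (Fin d), |L t| ^ p) ^ (1 / p) /
      h ^ ((p - 1) / p) =
      (2 : ℝ) ^ m * (h ^ ((1 - p) / p) *
        (∫ t : EuclideanSpace ℝ (Fin d), |L t| ^ p) ^ (1 / p)) := by
    rw [div_eq_mul_inv, show h ^ ((1 - p) / p) = (h ^ ((p - 1) / p))⁻¹ by
      rw [← Real.rpow_neg hh.le, show -((p - 1) / p) = (1 - p) / p by ring]]
    ring
  rw [hdiv]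
  refine (hL1.trans (le_of_eq hsimp)).trans ?_
  have h2k : (2 : ℝ) ^ k ≤ (2 : ℝ) ^ m := pow_le_pow_right₀ (by norm_num) hkm
  have hrest : (0 : ℝ) ≤ h ^ ((1 - p) / p) *
      (∫ t : EuclideanSpace ℝ (Fin d), |L t| ^ p) ^ (1 / p) :=
    mul_nonneg (Real.rpow_nonneg hh.le _) (Real.rpow_nonneg hI0 _)
  exact mul_le_mul_of_nonneg_right h2k hrest
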